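/- arXiv:2205.00429 — 7 statements merged into one kernel-verified Lean document; each statement's English description precedes it below -/
import Mathlib

section
/- Every positive concave mapping is a standard interference mapping: if T : ℝ₊^K → ℝ₊₊^K has each coordinate function concave (on the nonnegative orthant) and strictly positive, then T is monotone (x ≥ y implies T(x) ≥ T(y) componentwise) and scalable (for all α > 1 and x ≥ 0, αT(x) > T(αx) componentwise). -/
theorem stmt_2 {K : ℕ} (T : (Fin K → ℝ) → (Fin K → ℝ))
    (hpos : ∀ x : Fin K → ℝ, (∀ i, 0 ≤ x i) → ∀ k, 0 < T x k)
    (hconc : ∀ x y : Fin K → ℝ, (∀ i, 0 ≤ x i) → (∀ i, 0 ≤ y i) →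
      ∀ t : ℝ, 0 ≤ t → t ≤ 1 →
        ∀ k, t * T x k + (1 - t) * T y k ≤ T (t • x + (1 - t) • y) k) :
    (∀ x y : Fin K → ℝ, (∀ i, 0 ≤ y i) → y ≤ x → (∀ i, 0 ≤ x i) → T y ≤ T x) ∧
    (∀ x : Fin K → ℝ, (∀ i, 0 ≤ x i) → ∀ α : ℝ, 1 < α → ∀ k, T (α • x) k < α * T x k) := by
  constructor
  · intro x y hy hyx hx
    intro k
    by_contra hlt
    push_neg at hlt
    have hTx : 0 < T x k := hpos x hx k
    have hTy : 0 < T y k := hpos y hy k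
    set t : ℝ := T x k / T y k with ht_def
    have ht0 : 0 < t := div_pos hTx hTy
    have ht1 : t < 1 := (div_lt_one hTy).mpr hlt
    set b : Fin K → ℝ := (1 - t)⁻¹ • (x - t • y) with hb_def
    have hb : ∀ i, 0 ≤ b i := by
      intro i
      have h1 : t * y i ≤ y i := by
        nlinarith [hy i]
      have : 0 ≤ x i - t * y i := by linarith [hyx i]
      have h2 : (0:ℝ) ≤ (1 - t)⁻¹ := inv_nonneg.mpr (by linarith)
      simp only [hb_def, Pi.smul_apply, Pi.sub_apply, smul_eq_mul]
      nlinarith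
    have hcomb : t • y + (1 - t) • b = x := by
      funext i
      simp only [hb_def, Pi.add_apply, Pi.smul_apply, Pi.sub_apply, smul_eq_mul]
      have h1t : (1:ℝ) - t ≠ 0 := by linarith
      field_simp
      ring
    have := hconc y b hy hb t ht0.le ht1.le k
    rw [hcomb] at this
    have hbpos : 0 < T b k := hpos b hb k
    have : t * T y k = T x k := by
      rw [ht_def]; field_simp
    nlinarith [hconc y b hy hb t ht0.le ht1.le k, hcomb]
  · intro x hx α hα k
    have hα0 : 0 < α := by linarith
    have hx' : ∀ i, 0 ≤ (α • x) i := by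
      intro i; simp only [Pi.smul_apply, smul_eq_mul]; exact mul_nonneg hα0.le (hx i)
    have h0 : ∀ i : Fin K, 0 ≤ (0 : Fin K → ℝ) i := fun i => le_refl 0
    have hcomb : α⁻¹ • (α • x) + (1 - α⁻¹) • (0 : Fin K → ℝ) = x := by
      funext i
      simp only [Pi.add_apply, Pi.smul_apply, Pi.zero_apply, smul_eq_mul]
      field_simp
      ring
    have ht0 : (0:ℝ) ≤ α⁻¹ := by positivity
    have ht1 : α⁻¹ ≤ 1 := by
      rw [inv_le_one_iff₀]; right; linarith
    have := hconc (α • x) 0 hx' h0 α⁻¹ ht0 ht1 k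
    rw [hcomb] at this
    have h0pos : 0 < T 0 k := hpos 0 h0 k
    have hαinv : 0 < 1 - α⁻¹ := by
      have : α⁻¹ < 1 := by
        rw [inv_lt_one_iff₀]; right; exact hα
      linarith
    have hkey : α⁻¹ * T (α • x) k < T x k := by nlinarith
    have := mul_lt_mul_of_pos_left hkey hα0
    rw [← mul_assoc, mul_inv_cancel₀ hα0.ne', one_mul] at this
    linarith
end

section
/- A standard interference mapping has at most one fixed point: if T : ℝ₊^K → ℝ₊₊^K is monotone and scalable (αT(x) > T(αx) componentwise for all α > 1), and T(x) = x and T(y) = y with x, y ∈ ℝ₊^K, then x = y. -/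
lemma stmt_3_aux {K : ℕ} (T : (Fin K → ℝ) → (Fin K → ℝ))
    (hpos : ∀ x : Fin K → ℝ, (∀ i, 0 ≤ x i) → ∀ k, 0 < T x k)
    (hmono : ∀ x y : Fin K → ℝ, (∀ i, 0 ≤ y i) → (∀ i, 0 ≤ x i) → y ≤ x → T y ≤ T x)
    (hscal : ∀ x : Fin K → ℝ, (∀ i, 0 ≤ x i) → ∀ α : ℝ, 1 < α → ∀ k, T (α • x) k < α * T x k)
    (x y : Fin K → ℝ) (hx : ∀ i, 0 ≤ x i) (hy : ∀ i, 0 ≤ y i)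
    (hfx : T x = x) (hfy : T y = y) : y ≤ x := by
  rcases Nat.eq_zero_or_pos K with hK | hK
  · intro i; exact absurd i.2 (by omega)
  have hxpos : ∀ i, 0 < x i := fun i => hfx ▸ hpos x hx i
  have hne : (Finset.univ : Finset (Fin K)).Nonempty := by
    simpa [Finset.univ_nonempty_iff] using Fin.pos_iff_nonempty.mp hK
  set α := Finset.univ.sup' hne (fun i => y i / x i) with hα
  obtain ⟨j, _, hj⟩ := Finset.exists_mem_eq_sup' hne (fun i => y i / x i)
  have hαx : ∀ i, y i ≤ α * x i := by
    intro i
    have h1 : y i / x i ≤ α := by rw [hα]; exact Finset.le_sup' (f := fun i => y i / x i) (Finset.mem_univ i)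
    calc y i = (y i / x i) * x i := by rw [div_mul_cancel₀ _ (hxpos i).ne']
    _ ≤ α * x i := by nlinarith [hxpos i]
  have hα1 : α ≤ 1 := by
    by_contra h
    push_neg at h
    have hαxnn : ∀ i, (0:ℝ) ≤ (α • x) i := fun i => by
      have := hxpos i; simp [smul_eq_mul]; nlinarith
    have h2 : T y ≤ T (α • x) := hmono (α • x) y hy hαxnn (fun i => by
      simpa [smul_eq_mul] using hαx i)
    have h3 : T (α • x) j < α * T x j := hscal x hx α h j
    have hyj : y j = α * x j := by
      have : α = y j / x j := hj
      rw [this, div_mul_cancel₀ _ (hxpos j).ne']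
    have := h2 j
    rw [hfy, hfx] at *
    nlinarith
  intro i
  have := hαx i
  have := hxpos i
  nlinarith

theorem stmt_3 {K : ℕ} (T : (Fin K → ℝ) → (Fin K → ℝ))
    (hpos : ∀ x : Fin K → ℝ, (∀ i, 0 ≤ x i) → ∀ k, 0 < T x k)
    (hmono : ∀ x y : Fin K → ℝ, (∀ i, 0 ≤ y i) → (∀ i, 0 ≤ x i) → y ≤ x → T y ≤ T x)
    (hscal : ∀ x : Fin K → ℝ, (∀ i, 0 ≤ x i) → ∀ α : ℝ, 1 < α → ∀ k, T (α • x) k < α * T x k)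
    (x y : Fin K → ℝ) (hx : ∀ i, 0 ≤ x i) (hy : ∀ i, 0 ≤ y i)
    (hfx : T x = x) (hfy : T y = y) :
    x = y := by
  exact le_antisymm
    (stmt_3_aux T hpos hmono hscal y x hy hx hfy hfx)
    (stmt_3_aux T hpos hmono hscal x y hx hy hfx hfy)
end

section
/- Suppose (t★, p★) ∈ ℝ₊₊ × ℝ₊₊^K satisfies p★ = t★(Mp★ + u) and (1/p_max) max_n aₙᵀ p★ = 1, with M ≥ 0, u > 0, aₙ ≥ 0, p_max > 0. Then 1/t★ = max_{n∈{1,…,N}} ρ(Mₙ), where Mₙ := M + (1/p_max)·u·aₙᵀ and ρ denotes spectral radius. -/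
open scoped ENNReal

/-- The spectral radius of a real square matrix, computed over `ℂ`. -/
noncomputable def specRad {K : ℕ} (M : Matrix (Fin K) (Fin K) ℝ) : ℝ≥0∞ :=
  spectralRadius ℂ (Matrix.toEuclideanCLM (𝕜 := ℂ) (M.map (algebraMap ℝ ℂ)))

open Matrix

lemma my_mem_spectrum_iff {K : ℕ} (A : Matrix (Fin K) (Fin K) ℂ) (μ : ℂ) :
    μ ∈ spectrum ℂ A ↔ ∃ v, v ≠ 0 ∧ A.mulVec v = μ • v := by
  rw [spectrum.mem_iff, Matrix.isUnit_iff_isUnit_det, isUnit_iff_ne_zero, not_not,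
    ← Matrix.exists_mulVec_eq_zero_iff]
  have key : ∀ v, (algebraMap ℂ _ μ - A).mulVec v = μ • v - A.mulVec v := by
    intro v
    rw [Matrix.sub_mulVec, Algebra.algebraMap_eq_smul_one, Matrix.smul_mulVec,
      Matrix.one_mulVec]
  constructor
  · rintro ⟨v, hv, h⟩
    exact ⟨v, hv, (sub_eq_zero.mp ((key v) ▸ h)).symm⟩
  · rintro ⟨v, hv, h⟩
    exact ⟨v, hv, by rw [key v, h, sub_self]⟩

lemma my_map_mulVec {K : ℕ} (A : Matrix (Fin K) (Fin K) ℝ) (p : Fin K → ℝ) :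
    (A.map (algebraMap ℝ ℂ)).mulVec (fun i => (p i : ℂ)) = fun i => ((A.mulVec p i : ℝ) : ℂ) := by
  funext i
  simp only [Matrix.mulVec, dotProduct, Matrix.map_apply]
  push_cast
  rfl

lemma my_spectrum_eq {K : ℕ} (A : Matrix (Fin K) (Fin K) ℂ) :
    spectrum ℂ (Matrix.toEuclideanCLM (𝕜 := ℂ) A) = spectrum ℂ A :=
  AlgEquiv.spectrum_eq _ _

lemma specRad_le {K : ℕ} (A : Matrix (Fin K) (Fin K) ℝ) (hA : ∀ i j, 0 ≤ A i j)
    (p : Fin K → ℝ) (hp : ∀ i, 0 < p i) (lam : ℝ) (hlam : 0 ≤ lam)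
    (hle : ∀ i, A.mulVec p i ≤ lam * p i) :
    specRad A ≤ ENNReal.ofReal lam := by
  unfold specRad spectralRadius
  rw [my_spectrum_eq]
  refine iSup₂_le fun μ hμ => ?_
  obtain ⟨x, hx, hAx⟩ := (my_mem_spectrum_iff _ μ).mp hμ
  rw [← enorm_eq_nnnorm, ← ofReal_norm]
  refine ENNReal.ofReal_le_ofReal ?_
  -- real absolute value vector
  set y : Fin K → ℝ := fun i => ‖x i‖ with hy
  obtain ⟨j₁, hj₁⟩ : ∃ j, x j ≠ 0 := Function.ne_iff.mp hx
  obtain ⟨i₀, -, hmax⟩ := Finset.exists_max_image Finset.univ (fun j => y j / p j)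
    ⟨j₁, Finset.mem_univ _⟩
  set m : ℝ := y i₀ / p i₀ with hm
  have hyle : ∀ j, y j ≤ m * p j := fun j =>
    (div_le_iff₀ (hp j)).mp (hmax j (Finset.mem_univ _))
  have hmpos : 0 < m := by
    have h1 : 0 < y j₁ := norm_pos_iff.mpr hj₁
    have := hmax j₁ (Finset.mem_univ _)
    have h2 : 0 < y j₁ / p j₁ := div_pos h1 (hp j₁)
    linarith
  have hy0 : y i₀ = m * p i₀ := (div_mul_cancel₀ (y i₀) (hp i₀).ne').symm
  -- key inequality at i₀
  have key : ‖μ‖ * y i₀ ≤ A.mulVec y i₀ := by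
    have h1 : ‖μ * x i₀‖ = ‖μ‖ * y i₀ := norm_mul _ _
    have h2 : μ * x i₀ = (A.map (algebraMap ℝ ℂ)).mulVec x i₀ := by
      rw [hAx]; rfl
    rw [← h1, h2]
    calc ‖(A.map (algebraMap ℝ ℂ)).mulVec x i₀‖
        = ‖∑ j, (A.map (algebraMap ℝ ℂ)) i₀ j * x j‖ := rfl
      _ ≤ ∑ j, ‖(A.map (algebraMap ℝ ℂ)) i₀ j * x j‖ := norm_sum_le _ _
      _ = ∑ j, A i₀ j * y j := by
          refine Finset.sum_congr rfl fun j _ => ?_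
          rw [norm_mul, Matrix.map_apply]
          have h3 : ‖algebraMap ℝ ℂ (A i₀ j)‖ = A i₀ j := by
            rw [show algebraMap ℝ ℂ (A i₀ j) = ((A i₀ j : ℝ) : ℂ) from rfl,
              Complex.norm_real, Real.norm_eq_abs, abs_of_nonneg (hA i₀ j)]
          rw [h3]
      _ = A.mulVec y i₀ := rfl
  have h3 : A.mulVec y i₀ ≤ m * (A.mulVec p i₀) := by
    simp only [Matrix.mulVec, dotProduct, Finset.mul_sum]
    refine Finset.sum_le_sum fun j _ => ?_
    have := hyle j
    nlinarith [hA i₀ j]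
  have h4 : m * (A.mulVec p i₀) ≤ m * (lam * p i₀) :=
    mul_le_mul_of_nonneg_left (hle i₀) hmpos.le
  have h5 : ‖μ‖ * (m * p i₀) ≤ lam * (m * p i₀) := by
    rw [← hy0]; nlinarith
  have h6 : 0 < m * p i₀ := mul_pos hmpos (hp i₀)
  exact le_of_mul_le_mul_right (by linarith [h5]) h6

lemma le_specRad {K : ℕ} (A : Matrix (Fin K) (Fin K) ℝ)
    (p : Fin K → ℝ) (hp : p ≠ 0) (lam : ℝ) (hlam : 0 ≤ lam)
    (heq : A.mulVec p = lam • p) : ENNReal.ofReal lam ≤ specRad A := by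
  have hmem : (lam : ℂ) ∈ spectrum ℂ (A.map (algebraMap ℝ ℂ)) := by
    rw [my_mem_spectrum_iff]
    refine ⟨fun i => (p i : ℂ), ?_, ?_⟩
    · intro h0
      apply hp
      funext i
      have h1 : (p i : ℂ) = 0 := congrFun h0 i
      have h2 : p i = 0 := by exact_mod_cast h1
      simpa using h2
    · rw [my_map_mulVec, heq]
      funext i
      simp
  unfold specRad spectralRadius
  rw [my_spectrum_eq]
  have : ENNReal.ofReal lam = (‖(lam : ℂ)‖₊ : ℝ≥0∞) := by
    rw [← enorm_eq_nnnorm, ← ofReal_norm, Complex.norm_real, Real.norm_eq_abs,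
      abs_of_nonneg hlam]
  rw [this]
  exact le_iSup₂ (f := fun k (_ : k ∈ spectrum ℂ (A.map (algebraMap ℝ ℂ))) => (‖k‖₊ : ℝ≥0∞))
    (lam : ℂ) hmem

lemma my_vecMulVec_mulVec {K : ℕ} (u v q : Fin K → ℝ) :
    (vecMulVec u v).mulVec q = (v ⬝ᵥ q) • u := by
  funext i
  simp only [Matrix.mulVec, dotProduct, Matrix.vecMulVec_apply, Pi.smul_apply,
    smul_eq_mul, Finset.sum_mul]
  exact Finset.sum_congr rfl fun j _ => by ring


theorem stmt_12 {K N : ℕ} (hN : 0 < N) (pmax : ℝ) (hpmax : 0 < pmax)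
    (M : Matrix (Fin K) (Fin K) ℝ) (hM : ∀ i j, 0 ≤ M i j)
    (u : Fin K → ℝ) (hu : ∀ i, 0 < u i)
    (a : Fin N → Fin K → ℝ) (ha : ∀ n k, 0 ≤ a n k) (ha' : ∃ n k, 0 < a n k)
    (t : ℝ) (ht : 0 < t) (p : Fin K → ℝ) (hp : ∀ i, 0 < p i)
    (heq : p = t • (M.mulVec p + u))
    (hnorm : (1 / pmax) *
      Finset.univ.sup' ⟨⟨0, hN⟩, Finset.mem_univ _⟩ (fun n => a n ⬝ᵥ p) = 1) :
    ENNReal.ofReal (1 / t) =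
      ⨆ n : Fin N, specRad (M + (1 / pmax) • vecMulVec u (a n)) := by
  obtain ⟨n₁, k₁, -⟩ := ha'
  set lam : ℝ := 1 / t with hlam
  have hlam0 : 0 ≤ lam := by positivity
  have heig : ∀ i, M.mulVec p i + u i = lam * p i := by
    intro i
    have := congrFun heq i
    simp only [Pi.smul_apply, Pi.add_apply, smul_eq_mul] at this
    rw [hlam, this, ← mul_assoc, one_div_mul_cancel ht.ne', one_mul]
  -- sup equals pmax
  have hsup : Finset.univ.sup' ⟨⟨0, hN⟩, Finset.mem_univ _⟩ (fun n => a n ⬝ᵥ p) = pmax := by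
    field_simp at hnorm
    linarith
  have hsle : ∀ n : Fin N, a n ⬝ᵥ p ≤ pmax := fun n =>
    hsup ▸ Finset.le_sup' (f := fun n => a n ⬝ᵥ p) (Finset.mem_univ n)
  obtain ⟨n₀, -, hn₀⟩ := Finset.exists_mem_eq_sup' ⟨⟨0, hN⟩, Finset.mem_univ _⟩
    (fun n => a n ⬝ᵥ p)
  have hn₀' : a n₀ ⬝ᵥ p = pmax := by rw [← hn₀, hsup]
  have hmv : ∀ n : Fin N, (M + (1 / pmax) • vecMulVec u (a n)).mulVec p
      = M.mulVec p + ((1 / pmax) * (a n ⬝ᵥ p)) • u := by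
    intro n
    rw [Matrix.add_mulVec, Matrix.smul_mulVec, my_vecMulVec_mulVec, smul_smul]
  have hMn : ∀ n : Fin N, ∀ i j, 0 ≤ (M + (1 / pmax) • vecMulVec u (a n)) i j := by
    intro n i j
    simp only [Matrix.add_apply, Matrix.smul_apply, Matrix.vecMulVec_apply, smul_eq_mul]
    have := hM i j
    have := hu i
    have := ha n j
    positivity
  refine le_antisymm ?_ ?_
  · -- lower: at n₀
    have heq₀ : (M + (1 / pmax) • vecMulVec u (a n₀)).mulVec p = lam • p := by
      rw [hmv n₀, hn₀']
      funext i
      simp only [Pi.add_apply, Pi.smul_apply, smul_eq_mul]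
      have h1 : (1 / pmax) * pmax = 1 := by field_simp
      rw [h1, one_mul]
      exact heig i
    have hpne : p ≠ 0 := fun h0 => absurd (congrFun h0 k₁) (hp k₁).ne'
    exact le_trans (le_specRad _ p hpne lam hlam0 heq₀) (le_iSup (fun n => specRad (M + (1 / pmax) • vecMulVec u (a n))) n₀)
  · refine iSup_le fun n => specRad_le _ (hMn n) p hp lam hlam0 fun i => ?_
    rw [hmv n]
    simp only [Pi.add_apply, Pi.smul_apply, smul_eq_mul]
    have hc : (1 / pmax) * (a n ⬝ᵥ p) ≤ 1 := by
      rw [div_mul_eq_mul_div, one_mul, div_le_one hpmax]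
      exact hsle n
    have := heig i
    nlinarith [hu i]
end

section
/- If (t★, p★) ∈ ℝ₊₊ × ℝ₊₊^K satisfies p★ = t★(Mp★ + u) with M ≥ 0 and u > 0, and this solution is unique (as the solution to the conditional eigenvalue problem), then the matrix I − t★M is invertible and p★ = t★(I − t★M)^{-1}u. -/
open Matrix

theorem stmt_13 {K N : ℕ} (hN : 0 < N) (pmax : ℝ) (hpmax : 0 < pmax)
    (M : Matrix (Fin K) (Fin K) ℝ) (hM : ∀ i j, 0 ≤ M i j)
    (u : Fin K → ℝ) (hu : ∀ i, 0 < u i)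
    (a : Fin N → Fin K → ℝ) (ha : ∀ n k, 0 ≤ a n k)
    (nstar : (Fin K → ℝ) → ℝ)
    (hnstar : ∀ q, nstar q = (1 / pmax) *
      Finset.univ.sup' ⟨⟨0, hN⟩, Finset.mem_univ _⟩ (fun n => a n ⬝ᵥ fun k => |q k|))
    (t : ℝ) (ht : 0 < t) (p : Fin K → ℝ) (hp : ∀ i, 0 < p i)
    (heq : p = t • (M.mulVec p + u)) (hn1 : nstar p = 1)
    (huniq : ∀ q : Fin K → ℝ, (∀ i, 0 < q i) → nstar q = 1 →
      q = t • (M.mulVec q + u) → q = p) :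
    IsUnit (1 - t • M) ∧ p = t • (1 - t • M)⁻¹.mulVec u := by
  -- key algebraic identity: (1 - t•M) *ᵥ p = t • u
  have hpM : ∀ i, p i = t * ((M.mulVec p) i + u i) := by
    intro i; conv_lhs => rw [heq]
    simp [Pi.smul_apply]
  have hMp : ∀ i, t * (M.mulVec p) i = p i - t * u i := by
    intro i; rw [hpM i]; ring
  -- kernel of 1 - t•M is trivial
  have hker : ∀ v : Fin K → ℝ, (1 - t • M).mulVec v = 0 → v = 0 := by
    intro v hv
    by_contra hvne
    obtain ⟨j, hj⟩ : ∃ j, v j ≠ 0 := by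
      by_contra h; push_neg at h; exact hvne (funext h)
    have hvv : ∀ i, v i = t * (M.mulVec v) i := by
      intro i
      have := congrFun hv i
      simp [sub_mulVec, smul_mulVec, one_mulVec, sub_eq_zero, Pi.smul_apply] at this
      simpa using this
    -- pick maximizer of |v i| / p i
    haveI : Nonempty (Fin K) := ⟨j⟩
    obtain ⟨i, -, hi⟩ := Finset.exists_max_image Finset.univ
      (fun i => |v i| / p i) ⟨j, Finset.mem_univ j⟩
    set c := |v i| / p i with hc
    have hcj : |v j| / p j ≤ c := hi j (Finset.mem_univ j)
    have hcpos : 0 < c :=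
      lt_of_lt_of_le (div_pos (abs_pos.mpr hj) (hp j)) hcj
    have hbound : ∀ k, |v k| ≤ c * p k := by
      intro k
      have := hi k (Finset.mem_univ k)
      calc |v k| = (|v k| / p k) * p k := (div_mul_cancel₀ _ (hp k).ne').symm
        _ ≤ c * p k := mul_le_mul_of_nonneg_right this (hp k).le
    have key : |v i| ≤ c * (p i - t * u i) := by
      have h1 : |v i| = t * |(M.mulVec v) i| := by
        rw [hvv i, abs_mul, abs_of_pos ht]
      have h2 : |(M.mulVec v) i| ≤ ∑ k, M i k * (c * p k) := by
        rw [Matrix.mulVec, dotProduct]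
        refine le_trans (Finset.abs_sum_le_sum_abs _ _) ?_
        apply Finset.sum_le_sum
        intro k _
        rw [abs_mul, abs_of_nonneg (hM i k)]
        exact mul_le_mul_of_nonneg_left (hbound k) (hM i k)
      have h3 : ∑ k, M i k * (c * p k) = c * (M.mulVec p) i := by
        simp only [Matrix.mulVec, dotProduct, Finset.mul_sum]
        apply Finset.sum_congr rfl; intro k _; ring
      calc |v i| = t * |(M.mulVec v) i| := h1
        _ ≤ t * (c * (M.mulVec p) i) := by
            rw [← h3]; exact mul_le_mul_of_nonneg_left h2 ht.le
        _ = c * (t * (M.mulVec p) i) := by ring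
        _ = c * (p i - t * u i) := by rw [hMp i]
    have hvi : |v i| = c * p i := by
      rw [hc, div_mul_cancel₀ _ (hp i).ne']
    have : c * p i ≤ c * (p i - t * u i) := hvi ▸ key
    nlinarith [mul_pos (mul_pos hcpos ht) (hu i)]
  have hinj : Function.Injective (1 - t • M).mulVec := by
    intro x y hxy
    have : (1 - t • M).mulVec (x - y) = 0 := by
      rw [Matrix.mulVec_sub, hxy, sub_self]
    have := hker _ this
    exact sub_eq_zero.mp this
  have hunit : IsUnit (1 - t • M) := Matrix.mulVec_injective_iff_isUnit.mp hinj
  refine ⟨hunit, ?_⟩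
  have hA : (1 - t • M).mulVec p = t • u := by
    funext i
    simp only [sub_mulVec, smul_mulVec, one_mulVec, Pi.sub_apply, Pi.smul_apply,
      smul_eq_mul]
    rw [hMp i]; ring
  have hdet : IsUnit (1 - t • M).det := (Matrix.isUnit_iff_isUnit_det _).mp hunit
  calc p = (1 : Matrix (Fin K) (Fin K) ℝ).mulVec p := by rw [Matrix.one_mulVec]
    _ = ((1 - t • M)⁻¹ * (1 - t • M)).mulVec p := by rw [Matrix.nonsing_inv_mul _ hdet]
    _ = (1 - t • M)⁻¹.mulVec ((1 - t • M).mulVec p) := by rw [Matrix.mulVec_mulVec]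
    _ = (1 - t • M)⁻¹.mulVec (t • u) := by rw [hA]
    _ = t • (1 - t • M)⁻¹.mulVec u := by rw [Matrix.mulVec_smul]
end

section
/- If M ∈ ℝ^{K×K} is nonnegative and there exist t > 0 and p ∈ ℝ₊₊^K with p = t(Mp + u) for some u ∈ ℝ₊₊^K, then t·ρ(M) < 1, i.e., the spectral radius of tM is strictly less than 1. -/
open scoped ENNReal

theorem stmt_14 {K : ℕ} (M : Matrix (Fin K) (Fin K) ℝ) (hM : ∀ i j, 0 ≤ M i j)
    (u : Fin K → ℝ) (hu : ∀ i, 0 < u i)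
    (t : ℝ) (ht : 0 < t) (p : Fin K → ℝ) (hp : ∀ i, 0 < p i)
    (heq : p = t • (M.mulVec p + u)) :
    ENNReal.ofReal t * specRad M < 1 := by
  classical
  set M' := M.map (algebraMap ℝ ℂ) with hM'def
  rcases Nat.eq_zero_or_pos K with hK | hK
  · subst hK
    have hempty : spectrum ℂ M' = ∅ := by
      ext μ
      simp [spectrum.mem_iff, isUnit_of_subsingleton]
    rw [specRad, spectralRadius, AlgEquiv.spectrum_eq (Matrix.toEuclideanCLM (𝕜 := ℂ)) M',
      hempty]
    simp
  haveI : Nonempty (Fin K) := ⟨⟨0, hK⟩⟩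
  set lam : ℝ := Finset.univ.sup' Finset.univ_nonempty (fun k => (p k - t * u k) / p k)
    with hlamdef
  have hpk : ∀ k, p k - t * u k = t * (M.mulVec p) k := by
    intro k
    have := congrFun heq k
    simp only [Pi.smul_apply, Pi.add_apply, smul_eq_mul] at this
    linarith
  have hmvp : ∀ k, 0 ≤ (M.mulVec p) k := by
    intro k
    rw [Matrix.mulVec, dotProduct]
    exact Finset.sum_nonneg fun j _ => mul_nonneg (hM k j) (hp j).le
  have hle_lam : ∀ k, (p k - t * u k) / p k ≤ lam := fun k =>
    Finset.le_sup' (fun k => (p k - t * u k) / p k) (Finset.mem_univ k)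
  have hlam_lt : lam < 1 := by
    rw [hlamdef, Finset.sup'_lt_iff]
    intro k _
    rw [div_lt_one (hp k)]
    nlinarith [hu k]
  have hlam_nonneg : 0 ≤ lam := by
    refine le_trans ?_ (hle_lam (Classical.arbitrary (Fin K)))
    set k := Classical.arbitrary (Fin K)
    rw [hpk k]
    exact div_nonneg (mul_nonneg ht.le (hmvp _)) (hp _).le
  -- key bound on eigenvalues
  have key : ∀ μ ∈ spectrum ℂ M', t * ‖μ‖ ≤ lam := by
    intro μ hμ
    rw [← AlgEquiv.spectrum_eq (Matrix.toLinAlgEquiv' (R := ℂ) (n := Fin K)) M',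
      ← Module.End.hasEigenvalue_iff_mem_spectrum] at hμ
    obtain ⟨v, hv1, hv0⟩ := hμ.exists_hasEigenvector
    rw [Module.End.mem_eigenspace_iff] at hv1
    have hv : M'.mulVec v = μ • v := by
      simpa [Matrix.toLinAlgEquiv'_apply] using hv1
    obtain ⟨k, -, hk⟩ := Finset.exists_max_image Finset.univ (fun j => ‖v j‖ / p j)
      ⟨Classical.arbitrary (Fin K), Finset.mem_univ _⟩
    have hvk : 0 < ‖v k‖ := by
      obtain ⟨j, hj⟩ := Function.ne_iff.mp hv0
      have h1 : 0 < ‖v j‖ / p j := div_pos (by simpa using hj) (hp j)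
      have := h1.trans_le (hk j (Finset.mem_univ j))
      have := (div_pos_iff.mp this)
      rcases this with ⟨h, _⟩ | ⟨_, h⟩
      · exact h
      · exact absurd (hp k) (not_lt.mpr h.le)
    have hvj : ∀ j, ‖v j‖ ≤ ‖v k‖ / p k * p j := by
      intro j
      have h := hk j (Finset.mem_univ j)
      rw [div_le_div_iff₀ (hp j) (hp k)] at h
      rw [div_mul_eq_mul_div, le_div_iff₀ (hp k)]
      linarith
    have h1 : ‖μ‖ * ‖v k‖ = ‖(M'.mulVec v) k‖ := by
      rw [hv]
      simp [norm_mul]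
    have h2 : ‖(M'.mulVec v) k‖ ≤ ∑ j, M k j * ‖v j‖ := by
      rw [Matrix.mulVec, dotProduct]
      refine (norm_sum_le _ _).trans ?_
      apply Finset.sum_le_sum
      intro j _
      rw [norm_mul]
      have : ‖M' k j‖ = M k j := by
        simp [hM'def, Matrix.map_apply, Complex.norm_real, abs_of_nonneg (hM k j)]
      rw [this]
    have h3 : ∑ j, M k j * ‖v j‖ ≤ ‖v k‖ / p k * (M.mulVec p) k := by
      rw [Matrix.mulVec, dotProduct, Finset.mul_sum]
      apply Finset.sum_le_sum
      intro j _
      calc M k j * ‖v j‖ ≤ M k j * (‖v k‖ / p k * p j) :=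
            mul_le_mul_of_nonneg_left (hvj j) (hM k j)
        _ = ‖v k‖ / p k * (M k j * p j) := by ring
    have h4 : t * (M.mulVec p) k ≤ lam * p k := by
      have := hle_lam k
      rw [div_le_iff₀ (hp k)] at this
      linarith [hpk k]
    have h5 : t * ‖μ‖ * ‖v k‖ ≤ lam * ‖v k‖ := by
      have : t * (‖μ‖ * ‖v k‖) ≤ t * (‖v k‖ / p k * (M.mulVec p) k) := by
        apply mul_le_mul_of_nonneg_left _ ht.le
        rw [h1]
        exact h2.trans h3
      calc t * ‖μ‖ * ‖v k‖ = t * (‖μ‖ * ‖v k‖) := by ring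
        _ ≤ t * (‖v k‖ / p k * (M.mulVec p) k) := this
        _ = ‖v k‖ / p k * (t * (M.mulVec p) k) := by ring
        _ ≤ ‖v k‖ / p k * (lam * p k) :=
            mul_le_mul_of_nonneg_left h4 (div_nonneg (norm_nonneg _) (hp k).le)
        _ = lam * (‖v k‖ / p k * p k) := by ring
        _ = lam * ‖v k‖ := by rw [div_mul_cancel₀ _ (hp k).ne']
    exact le_of_mul_le_mul_right (by linarith) hvk
  -- conclude
  have hsp : spectrum ℂ (Matrix.toEuclideanCLM (𝕜 := ℂ) M') = spectrum ℂ M' :=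
    AlgEquiv.spectrum_eq _ _
  have : ENNReal.ofReal t * specRad M ≤ ENNReal.ofReal lam := by
    rw [specRad, spectralRadius, hsp, ENNReal.mul_iSup]
    refine iSup_le fun μ => ?_
    rw [ENNReal.mul_iSup]
    refine iSup_le fun hμ => ?_
    calc ENNReal.ofReal t * (‖μ‖₊ : ℝ≥0∞)
        = ENNReal.ofReal t * ENNReal.ofReal ‖μ‖ := by
          rw [ofReal_norm_eq_enorm]; rfl
      _ = ENNReal.ofReal (t * ‖μ‖) := (ENNReal.ofReal_mul ht.le).symm
      _ ≤ ENNReal.ofReal lam := ENNReal.ofReal_le_ofReal (key μ hμ)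
  refine this.trans_lt ?_
  rw [← ENNReal.ofReal_one]
  exact ENNReal.ofReal_lt_ofReal_iff_of_nonneg hlam_nonneg |>.mpr hlam_lt
end

section
/- For a standard interference mapping T : ℝ₊^K → ℝ₊₊^K (monotone and scalable) and any λ ≥ 1, if x ∈ ℝ₊^K satisfies T(x) = λx, then for every μ with T(y) = μy, y ∈ ℝ₊₊^K, ‖x‖ = ‖y‖ = 1 for a fixed monotone norm ‖·‖, we have (λ, x) = (μ, y); i.e., the conditional eigenvalue problem T(x) = λx, ‖x‖ = 1 has at most one solution (λ, x) ∈ ℝ₊₊ × ℝ₊₊^K. -/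
/-- Auxiliary half of the uniqueness argument: comparing two normalized
eigenpairs via the maximal componentwise ratio. -/
theorem aux_18 {K : ℕ} (T : (Fin K → ℝ) → (Fin K → ℝ))
    (hmono : ∀ x y : Fin K → ℝ, (∀ i, 0 ≤ x i) → (∀ i, 0 ≤ y i) → x ≤ y → T x ≤ T y)
    (hscal : ∀ x : Fin K → ℝ, (∀ i, 0 ≤ x i) → ∀ α : ℝ, 1 < α → ∀ k, T (α • x) k < α * T x k)
    (nn : (Fin K → ℝ) → ℝ)
    (hnnhom : ∀ (c : ℝ) (p), nn (c • p) = |c| * nn p)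
    (hnnmono : ∀ p q : Fin K → ℝ, (∀ i, 0 ≤ p i) → p ≤ q → nn p ≤ nn q)
    (lam mu : ℝ) (hmu : 0 < mu)
    (x y : Fin K → ℝ) (hx : ∀ i, 0 < x i) (hy : ∀ i, 0 < y i)
    (hTx : T x = lam • x) (hnx : nn x = 1)
    (hTy : T y = mu • y) (hny : nn y = 1)
    (hne : Nonempty (Fin K)) :
    lam ≤ mu ∧ (lam < mu ∨ x ≤ y) := by
  have hxnn : ∀ i, 0 ≤ x i := fun i => (hx i).le
  have hynn : ∀ i, 0 ≤ y i := fun i => (hy i).le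
  have huniv : (Finset.univ : Finset (Fin K)).Nonempty := Finset.univ_nonempty
  set f : Fin K → ℝ := fun k => x k / y k with hf
  obtain ⟨j, _, hj⟩ := Finset.exists_mem_eq_sup' huniv f
  set t : ℝ := Finset.univ.sup' huniv f with htdef
  have hle : ∀ k, x k ≤ t * y k := by
    intro k
    have hk : f k ≤ t := Finset.le_sup' f (Finset.mem_univ k)
    have := (div_le_iff₀ (hy k)).mp hk
    linarith
  have hxj : x j = t * y j := by
    have : t = x j / y j := hj
    rw [this, div_mul_cancel₀ _ (hy j).ne']
  have ht0 : 0 < t := by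
    have : (0:ℝ) < x j := hx j
    nlinarith [hy j, hle j]
  have htynn : ∀ i, 0 ≤ t * y i := fun i => mul_nonneg ht0.le (hynn i)
  -- t ≥ 1 from the norm conditions
  have ht1 : 1 ≤ t := by
    have h1 : nn x ≤ nn (t • y) := by
      apply hnnmono x (t • y) hxnn
      intro k
      simpa [smul_eq_mul] using hle k
    rw [hnnhom, hny, abs_of_pos ht0, mul_one, hnx] at h1
    exact h1
  have hxy : x ≤ t • y := by
    intro k; simpa [smul_eq_mul] using hle k
  have hmid : T x j ≤ T (t • y) j :=
    hmono x (t • y) hxnn (fun i => by simpa [smul_eq_mul] using htynn i) hxy j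
  have hTxj : T x j = lam * x j := by rw [hTx]; simp [smul_eq_mul]
  have hTyj : T y j = mu * y j := by rw [hTy]; simp [smul_eq_mul]
  rcases ht1.eq_or_lt with h1 | h1
  · -- t = 1 : x ≤ y and lam ≤ mu
    have hxy' : x ≤ y := by
      intro k; have := hle k; rw [← h1] at this; linarith
    have : lam * x j ≤ mu * y j := by
      have := hmono x y hxnn hynn hxy' j
      rw [hTxj, hTyj] at this; exact this
    have hxjy : x j = y j := by rw [hxj, ← h1]; ring
    constructor
    · have hxjpos := hx j
      rw [hxjy] at this
      have := le_of_mul_le_mul_right (by linarith [this] : lam * y j ≤ mu * y j) (hy j)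
      linarith
    · exact Or.inr hxy'
  · -- t > 1 : strict scalability gives lam < mu
    have hstrict : T (t • y) j < t * T y j := hscal y hynn t h1 j
    have : lam * x j < mu * x j := by
      calc lam * x j = T x j := hTxj.symm
        _ ≤ T (t • y) j := hmid
        _ < t * T y j := hstrict
        _ = t * (mu * y j) := by rw [hTyj]
        _ = mu * x j := by rw [hxj]; ring
    have hlm : lam < mu := lt_of_mul_lt_mul_right (by linarith) (hxnn j)
    exact ⟨hlm.le, Or.inl hlm⟩

/-- Uniqueness of the solution of the conditional eigenvalue problem
`T(x) = λ x`, `‖x‖ = 1` for a standard interference mapping `T` and a monotone norm. -/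
theorem stmt_18 {K : ℕ} (T : (Fin K → ℝ) → (Fin K → ℝ))
    (hcont : ContinuousOn T {p | ∀ i, 0 ≤ p i})
    (hpos : ∀ x : Fin K → ℝ, (∀ i, 0 ≤ x i) → ∀ k, 0 < T x k)
    (hmono : ∀ x y : Fin K → ℝ, (∀ i, 0 ≤ x i) → (∀ i, 0 ≤ y i) → x ≤ y → T x ≤ T y)
    (hscal : ∀ x : Fin K → ℝ, (∀ i, 0 ≤ x i) → ∀ α : ℝ, 1 < α → ∀ k, T (α • x) k < α * T x k)
    (nn : (Fin K → ℝ) → ℝ)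
    (hnn0 : ∀ p, nn p = 0 ↔ p = 0)
    (hnnhom : ∀ (c : ℝ) (p), nn (c • p) = |c| * nn p)
    (hnntri : ∀ p q, nn (p + q) ≤ nn p + nn q)
    (hnnmono : ∀ p q : Fin K → ℝ, (∀ i, 0 ≤ p i) → p ≤ q → nn p ≤ nn q)
    (lam mu : ℝ) (hlam : 0 < lam) (hmu : 0 < mu)
    (x y : Fin K → ℝ) (hx : ∀ i, 0 < x i) (hy : ∀ i, 0 < y i)
    (hTx : T x = lam • x) (hnx : nn x = 1)
    (hTy : T y = mu • y) (hny : nn y = 1) :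
    lam = mu ∧ x = y := by
  have hne : Nonempty (Fin K) := by
    by_contra h
    have hx0 : x = 0 := funext fun i => absurd ⟨i⟩ h
    rw [hx0, (hnn0 0).mpr rfl] at hnx
    norm_num at hnx
  obtain ⟨h1, h2⟩ := aux_18 T hmono hscal nn hnnhom hnnmono lam mu hmu x y hx hy hTx hnx hTy hny hne
  obtain ⟨h3, h4⟩ := aux_18 T hmono hscal nn hnnhom hnnmono mu lam hlam y x hy hx hTy hny hTx hnx hne
  have heq : lam = mu := le_antisymm h1 h3
  refine ⟨heq, ?_⟩
  rcases h2 with h | h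
  · exact absurd heq (ne_of_lt h)
  · rcases h4 with h' | h'
    · exact absurd heq.symm (ne_of_lt h')
    · exact le_antisymm h h'
end

section
/- Epigraph reformulation: if (t★, p★) ∈ ℝ₊₊ × ℝ₊₊^K satisfies p★ = t★(Mp★ + u) and ‖p★‖⋆ ≤ 1, and t★ is maximal among all t for which such a pair exists, then p★ maximizes min_k (b_k p_k)/(c_kᵀp + σ_k) over the feasible set S = {p ≥ 0 : ‖p‖⋆ ≤ 1}, and the optimal value equals t★. -/
open Matrix

lemma aux_fix_19 {K : ℕ} (M : Matrix (Fin K) (Fin K) ℝ) (hM : ∀ i j, 0 ≤ M i j)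
    (u : Fin K → ℝ) (hu : ∀ k, 0 < u k) (s : ℝ) (hs : 0 < s)
    (q : Fin K → ℝ) (hq0 : ∀ k, 0 ≤ q k)
    (hq : ∀ k, s * (M.mulVec q k + u k) ≤ q k) :
    ∃ r : Fin K → ℝ, (∀ k, 0 < r k) ∧ (∀ k, r k ≤ q k) ∧
      r = s • (M.mulVec r + u) := by
  have hmono : ∀ x y : Fin K → ℝ, (∀ k, x k ≤ y k) → ∀ k,
      M.mulVec x k ≤ M.mulVec y k := by
    intro x y h k
    simp only [Matrix.mulVec, dotProduct]
    exact Finset.sum_le_sum fun j _ => mul_le_mul_of_nonneg_left (h j) (hM k j)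
  have hMnn : ∀ (x : Fin K → ℝ), (∀ k, 0 ≤ x k) → ∀ k, 0 ≤ M.mulVec x k := by
    intro x hx k
    simp only [Matrix.mulVec, dotProduct]
    exact Finset.sum_nonneg fun j _ => mul_nonneg (hM k j) (hx j)
  set A : Set (Fin K → ℝ) := {x | (∀ k, s * u k ≤ x k) ∧ (∀ k, x k ≤ q k) ∧
    ∀ k, s * (M.mulVec x k + u k) ≤ x k} with hA
  have hqA : q ∈ A := by
    refine ⟨fun k => ?_, fun k => le_rfl, hq⟩
    have := hMnn q hq0 k
    nlinarith [hq k]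
  set r : Fin K → ℝ := fun k => sInf ((fun x => x k) '' A) with hr
  have hbdd : ∀ k, BddBelow ((fun x => x k) '' A) := by
    intro k
    exact ⟨s * u k, by rintro y ⟨x, hx, rfl⟩; exact hx.1 k⟩
  have hne : ∀ k, ((fun x => x k) '' A).Nonempty := fun k => ⟨q k, q, hqA, rfl⟩
  have hrle : ∀ x ∈ A, ∀ k, r k ≤ x k := fun x hx k => csInf_le (hbdd k) ⟨x, hx, rfl⟩
  have hler : ∀ k, s * u k ≤ r k := by
    intro k
    exact le_csInf (hne k) (by rintro y ⟨x, hx, rfl⟩; exact hx.1 k)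
  have hrq : ∀ k, r k ≤ q k := hrle q hqA
  have hr0 : ∀ k, 0 ≤ r k := fun k =>
    le_trans (le_of_lt (mul_pos hs (hu k))) (hler k)
  have hTr : ∀ k, s * (M.mulVec r k + u k) ≤ r k := by
    intro k
    refine le_csInf (hne k) ?_
    rintro y ⟨x, hx, rfl⟩
    have h1 := hmono r x (hrle x hx) k
    have := hx.2.2 k
    nlinarith
  have hTrA : (fun k => s * (M.mulVec r k + u k)) ∈ A := by
    refine ⟨fun k => ?_, fun k => ?_, fun k => ?_⟩
    · show s * u k ≤ s * (M.mulVec r k + u k)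
      have := hMnn r hr0 k; nlinarith
    · show s * (M.mulVec r k + u k) ≤ q k
      have h1 := hmono r q hrq k
      have := hq k
      nlinarith
    · show s * ((M.mulVec fun k => s * (M.mulVec r k + u k)) k + u k) ≤ s * (M.mulVec r k + u k)
      have h1 := hmono _ r hTr k
      nlinarith
  have hle2 : ∀ k, r k ≤ s * (M.mulVec r k + u k) := hrle _ hTrA
  refine ⟨r, fun k => lt_of_lt_of_le (mul_pos hs (hu k)) (hler k), hrq, ?_⟩
  funext k
  have := le_antisymm (hle2 k) (hTr k)
  simpa [Pi.smul_apply, Pi.add_apply, smul_eq_mul] using this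

theorem stmt_19 {K N : ℕ} (hK : 0 < K) (hN : 0 < N) (pmax : ℝ) (hpmax : 0 < pmax)
    (a : Fin N → Fin K → ℝ) (ha : ∀ n k, 0 ≤ a n k)
    (b : Fin K → ℝ) (hb : ∀ k, 0 < b k)
    (C : Matrix (Fin K) (Fin K) ℝ) (hC : ∀ i j, 0 ≤ C i j)
    (σv : Fin K → ℝ) (hσ : ∀ k, 0 < σv k)
    (M : Matrix (Fin K) (Fin K) ℝ) (hMdef : ∀ k j, M k j = C j k / b k)
    (u : Fin K → ℝ) (hudef : ∀ k, u k = σv k / b k)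
    (nstar : (Fin K → ℝ) → ℝ)
    (hnstar : ∀ q, nstar q = (1 / pmax) *
      Finset.univ.sup' ⟨⟨0, hN⟩, Finset.mem_univ _⟩ (fun n => a n ⬝ᵥ fun k => |q k|))
    (S : Set (Fin K → ℝ)) (hSdef : S = {q | (∀ i, 0 ≤ q i) ∧ nstar q ≤ 1})
    (t : ℝ) (ht : 0 < t) (p : Fin K → ℝ) (hp : ∀ i, 0 < p i)
    (heq : p = t • (M.mulVec p + u)) (hfeas : nstar p ≤ 1)
    (hmax : ∀ (t' : ℝ) (q : Fin K → ℝ), 0 < t' → (∀ i, 0 < q i) →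
      q = t' • (M.mulVec q + u) → nstar q ≤ 1 → t' ≤ t) :
    p ∈ S ∧
    (∀ q ∈ S, Finset.univ.inf' ⟨⟨0, hK⟩, Finset.mem_univ _⟩
        (fun k => b k * q k / ((fun i => C i k) ⬝ᵥ q + σv k)) ≤ t) ∧
    Finset.univ.inf' ⟨⟨0, hK⟩, Finset.mem_univ _⟩
        (fun k => b k * p k / ((fun i => C i k) ⬝ᵥ p + σv k)) = t := by
  have hM : ∀ i j, 0 ≤ M i j := fun i j => by
    rw [hMdef]; exact div_nonneg (hC j i) (hb i).le
  have hu : ∀ k, 0 < u k := fun k => by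
    rw [hudef]; exact div_pos (hσ k) (hb k)
  have key : ∀ (v : Fin K → ℝ) k,
      M.mulVec v k + u k = ((fun i => C i k) ⬝ᵥ v + σv k) / b k := by
    intro v k
    simp only [Matrix.mulVec, dotProduct, hMdef, hudef]
    have h1 : ∀ j, C j k / b k * v j = C j k * v j / b k := fun j => by ring
    simp_rw [h1, ← Finset.sum_div, ← add_div]
  have hdpos : ∀ (v : Fin K → ℝ), (∀ i, 0 ≤ v i) → ∀ k,
      0 < (fun i => C i k) ⬝ᵥ v + σv k := by
    intro v hv k
    have : (0:ℝ) ≤ (fun i => C i k) ⬝ᵥ v :=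
      Finset.sum_nonneg fun j _ => mul_nonneg (hC j k) (hv j)
    linarith [hσ k]
  -- part 3 value
  have hval : ∀ k, b k * p k / ((fun i => C i k) ⬝ᵥ p + σv k) = t := by
    intro k
    have hpk : p k = t * (M.mulVec p k + u k) := by
      have := congrFun heq k
      simpa [Pi.smul_apply, Pi.add_apply, smul_eq_mul] using this
    rw [key p k] at hpk
    have hd := hdpos p (fun i => (hp i).le) k
    rw [div_eq_iff hd.ne']
    have hbk := hb k
    field_simp at hpk
    nlinarith
  refine ⟨by rw [hSdef]; exact ⟨fun i => (hp i).le, hfeas⟩, ?_, ?_⟩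
  · intro q hqS
    rw [hSdef] at hqS
    obtain ⟨hq0, hqn⟩ := hqS
    by_contra hcon
    push_neg at hcon
    set s := Finset.univ.inf' ⟨⟨0, hK⟩, Finset.mem_univ _⟩
        (fun k => b k * q k / ((fun i => C i k) ⬝ᵥ q + σv k)) with hsdef
    have hs : 0 < s := lt_trans ht hcon
    have hqfix : ∀ k, s * (M.mulVec q k + u k) ≤ q k := by
      intro k
      have hle : s ≤ b k * q k / ((fun i => C i k) ⬝ᵥ q + σv k) :=
        Finset.inf'_le _ (Finset.mem_univ k)
      have hd := hdpos q hq0 k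
      rw [key q k]
      rw [le_div_iff₀ hd] at hle
      rw [← mul_div_assoc, div_le_iff₀ (hb k)]
      nlinarith
    obtain ⟨r, hrpos, hrq, hrfix⟩ := aux_fix_19 M hM u hu s hs q hq0 hqfix
    have hnr : nstar r ≤ 1 := by
      refine le_trans ?_ hqn
      rw [hnstar, hnstar]
      apply mul_le_mul_of_nonneg_left _ (by positivity)
      apply Finset.sup'_le
      intro n _
      refine le_trans ?_ (Finset.le_sup' _ (Finset.mem_univ n))
      apply Finset.sum_le_sum
      intro j _
      apply mul_le_mul_of_nonneg_left _ (ha n j)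
      show |r j| ≤ |q j|
      rw [abs_of_pos (hrpos j), abs_of_nonneg (hq0 j)]
      exact hrq j
    exact absurd (hmax s r hs hrpos hrfix hnr) (not_le.mpr hcon)
  · have : (fun k => b k * p k / ((fun i => C i k) ⬝ᵥ p + σv k)) = fun _ => t :=
      funext hval
    rw [this]; exact Finset.inf'_const _ _
end
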